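/- arXiv:2211.12031 — 2 statements merged into one kernel-verified Lean document; each statement's English description precedes it below -/
import Mathlib

section
/- Let m ≥ n be positive integers, let A, B ∈ ℝ^{m×m} be symmetric positive definite matrices, and let R ∈ ℝ^{n×m} be surjective. Then the minimum eigenvalue of (R B⁻¹ Rᵀ)⁻¹ (R A Rᵀ) is at least the minimum of the generalized Rayleigh quotient (xᵀAx)/(xᵀB⁻¹x) over nonzero x ∈ ℝ^m; i.e., λ_min((R B⁻¹ Rᵀ)⁻¹ R A Rᵀ) ≥ λ_min(BA). -/
open Matrix
open scoped MatrixOrder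

lemma my_mem_spectrum_iff {k : ℕ} {M : Matrix (Fin k) (Fin k) ℝ} {μ : ℝ} :
    μ ∈ spectrum ℝ M ↔ ∃ v : Fin k → ℝ, v ≠ 0 ∧ M *ᵥ v = μ • v := by
  rw [spectrum.mem_iff, Matrix.isUnit_iff_isUnit_det, isUnit_iff_ne_zero, not_ne_iff,
      ← Matrix.exists_mulVec_eq_zero_iff]
  have key : ∀ v : Fin k → ℝ,
      (algebraMap ℝ (Matrix (Fin k) (Fin k) ℝ) μ - M) *ᵥ v = μ • v - M *ᵥ v := by
    intro v
    rw [Matrix.sub_mulVec, Algebra.algebraMap_eq_smul_one, Matrix.smul_mulVec,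
      Matrix.one_mulVec]
  constructor
  · rintro ⟨v, hv, h⟩
    rw [key] at h
    exact ⟨v, hv, (sub_eq_zero.mp h).symm⟩
  · rintro ⟨v, hv, h⟩
    exact ⟨v, hv, by rw [key, h, sub_self]⟩

lemma my_conj_posDef {m n : ℕ} {P : Matrix (Fin m) (Fin m) ℝ} (hP : P.PosDef)
    {R : Matrix (Fin n) (Fin m) ℝ} (hRT : ∀ x : Fin n → ℝ, x ≠ 0 → Rᵀ *ᵥ x ≠ 0) :
    (R * P * Rᵀ).PosDef := by
  refine Matrix.PosDef.of_dotProduct_mulVec_pos ?_ ?_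
  · have := Matrix.isHermitian_mul_mul_conjTranspose R hP.isHermitian
    rwa [Matrix.conjTranspose_eq_transpose_of_trivial] at this
  · intro x hx
    have h1 : (R * P * Rᵀ) *ᵥ x = R *ᵥ (P *ᵥ (Rᵀ *ᵥ x)) := by
      rw [← Matrix.mulVec_mulVec, ← Matrix.mulVec_mulVec]
    have h2 : star x ⬝ᵥ ((R * P * Rᵀ) *ᵥ x)
        = star (Rᵀ *ᵥ x) ⬝ᵥ (P *ᵥ (Rᵀ *ᵥ x)) := by
      simp only [star_trivial, h1, Matrix.dotProduct_mulVec (v := x) (A := R),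
        ← Matrix.mulVec_transpose]
    rw [h2]
    exact hP.dotProduct_mulVec_pos (hRT x hx)

/-- λ_min((R B⁻¹ Rᵀ)⁻¹ R A Rᵀ) ≥ λ_min(BA), where λ_min(BA) is the minimum of the
generalized Rayleigh quotient (xᵀAx)/(xᵀB⁻¹x) over nonzero x ∈ ℝ^m, and λ_min of the
preconditioned matrix is the infimum of its (real, positive) spectrum. -/
theorem stmt_1 {m n : ℕ} (hmn : n ≤ m) (hn : 0 < n)
    (A B : Matrix (Fin m) (Fin m) ℝ) (hA : A.PosDef) (hB : B.PosDef)
    (R : Matrix (Fin n) (Fin m) ℝ) (hR : Function.Surjective R.mulVec) :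
    sInf {r : ℝ | ∃ x : Fin m → ℝ, x ≠ 0 ∧
        r = (x ⬝ᵥ A.mulVec x) / (x ⬝ᵥ B⁻¹.mulVec x)} ≤
    sInf (spectrum ℝ ((R * B⁻¹ * R.transpose)⁻¹ * (R * A * R.transpose))) := by
  have hBi : B⁻¹.PosDef := hB.inv
  -- transpose injectivity
  have hRT : ∀ x : Fin n → ℝ, x ≠ 0 → Rᵀ *ᵥ x ≠ 0 := by
    intro x hx h0
    apply hx
    have hz : ∀ z : Fin n → ℝ, x ⬝ᵥ z = 0 := by
      intro z
      obtain ⟨y, hy⟩ := hR z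
      rw [← hy, Matrix.dotProduct_mulVec, ← Matrix.mulVec_transpose, h0,
        zero_dotProduct]
    exact dotProduct_self_eq_zero.mp (hz x)
  set C : Matrix (Fin n) (Fin n) ℝ := R * B⁻¹ * Rᵀ with hCdef
  set D : Matrix (Fin n) (Fin n) ℝ := R * A * Rᵀ with hDdef
  have hC : C.PosDef := my_conj_posDef hBi hRT
  have hD : D.PosDef := my_conj_posDef hA hRT
  set S : Set ℝ := {r : ℝ | ∃ x : Fin m → ℝ, x ≠ 0 ∧
      r = (x ⬝ᵥ A.mulVec x) / (x ⬝ᵥ B⁻¹.mulVec x)} with hSdef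
  -- S is bounded below by 0
  have hSbdd : BddBelow S := by
    refine ⟨0, ?_⟩
    rintro r ⟨x, hx, rfl⟩
    have h1 : 0 < x ⬝ᵥ A.mulVec x := by simpa [star_trivial] using hA.dotProduct_mulVec_pos hx
    have h2 : 0 < x ⬝ᵥ B⁻¹.mulVec x := by simpa [star_trivial] using hBi.dotProduct_mulVec_pos hx
    positivity
  -- spectrum ⊆ S
  have hsub : spectrum ℝ (C⁻¹ * D) ⊆ S := by
    intro μ hμ
    obtain ⟨v, hv, hev⟩ := my_mem_spectrum_iff.mp hμ
    have hCC : C * (C⁻¹ * D) = D := by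
      rw [← Matrix.mul_assoc, Matrix.mul_nonsing_inv _ hC.det_pos.ne'.isUnit,
        Matrix.one_mul]
    have hDv : D *ᵥ v = μ • (C *ᵥ v) := by
      have := congrArg (C *ᵥ ·) hev
      simpa [Matrix.mulVec_mulVec, hCC, Matrix.mulVec_smul] using this
    set x : Fin m → ℝ := Rᵀ *ᵥ v with hxdef
    have hx : x ≠ 0 := hRT v hv
    have key : ∀ P : Matrix (Fin m) (Fin m) ℝ,
        v ⬝ᵥ ((R * P * Rᵀ) *ᵥ v) = x ⬝ᵥ (P *ᵥ x) := by
      intro P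
      rw [← Matrix.mulVec_mulVec, ← Matrix.mulVec_mulVec,
        Matrix.dotProduct_mulVec (v := v) (A := R), ← Matrix.mulVec_transpose]
    have hnum : v ⬝ᵥ (D *ᵥ v) = x ⬝ᵥ (A *ᵥ x) := key A
    have hden : v ⬝ᵥ (C *ᵥ v) = x ⬝ᵥ (B⁻¹ *ᵥ x) := key B⁻¹
    have hdenpos : 0 < x ⬝ᵥ (B⁻¹ *ᵥ x) := by simpa [star_trivial] using hBi.dotProduct_mulVec_pos hx
    refine ⟨x, hx, ?_⟩
    have : x ⬝ᵥ (A *ᵥ x) = μ * (x ⬝ᵥ (B⁻¹ *ᵥ x)) := by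
      rw [← hnum, ← hden, hDv, dotProduct_smul, smul_eq_mul]
    rw [this, mul_div_assoc, div_self hdenpos.ne', mul_one]
  -- spectrum is nonempty
  have hne : (spectrum ℝ (C⁻¹ * D)).Nonempty := by
    have hCs := hC.posSemidef
    set L : Matrix (Fin n) (Fin n) ℝ := CFC.sqrt C with hLdef
    have hLL : L * L = C := CFC.sqrt_mul_sqrt_self C hCs.nonneg
    have hLdet : IsUnit L.det := by
      have : L.det * L.det = C.det := by rw [← Matrix.det_mul, hLL]
      have hC0 : (0:ℝ) < C.det := hC.det_pos
      refine isUnit_iff_ne_zero.mpr fun h => ?_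
      rw [h, mul_zero] at this
      exact hC0.ne' this.symm
    have hLsym : Lᵀ = L := by
      have := (CFC.sqrt_nonneg C).posSemidef.isHermitian
      rwa [Matrix.IsHermitian, Matrix.conjTranspose_eq_transpose_of_trivial] at this
    have hLiT' : (L⁻¹)ᵀ = L⁻¹ := by
      rw [Matrix.transpose_nonsing_inv, hLsym]
    have hLiT : ∀ x : Fin n → ℝ, x ≠ 0 → (L⁻¹)ᵀ *ᵥ x ≠ 0 := by
      intro x hx h0
      apply hx
      rw [hLiT'] at h0
      have := congrArg (L *ᵥ ·) h0
      simpa [Matrix.mulVec_mulVec, Matrix.mul_nonsing_inv _ hLdet] using this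
    have hS' : (L⁻¹ * D * L⁻¹).PosDef := by
      have := my_conj_posDef hD hLiT
      rwa [hLiT'] at this
    have : Nonempty (Fin n) := ⟨⟨0, hn⟩⟩
    obtain i := (⟨0, hn⟩ : Fin n)
    have hμ := hS'.isHermitian.eigenvalues_mem_spectrum_real i
    set μ := hS'.isHermitian.eigenvalues i with hμdef
    obtain ⟨w, hw, hew⟩ := my_mem_spectrum_iff.mp hμ
    refine ⟨μ, my_mem_spectrum_iff.mpr ⟨L⁻¹ *ᵥ w, ?_, ?_⟩⟩
    · intro h0
      apply hw
      have := congrArg (L *ᵥ ·) h0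
      simpa [Matrix.mulVec_mulVec, Matrix.mul_nonsing_inv _ hLdet] using this
    · have hCi : C⁻¹ = L⁻¹ * L⁻¹ := by
        rw [← hLL, Matrix.mul_inv_rev]
      calc (C⁻¹ * D) *ᵥ (L⁻¹ *ᵥ w) = L⁻¹ *ᵥ ((L⁻¹ * D * L⁻¹) *ᵥ w) := by
            rw [hCi]; simp [Matrix.mulVec_mulVec, Matrix.mul_assoc]
        _ = L⁻¹ *ᵥ (μ • w) := by rw [hew]
        _ = μ • (L⁻¹ *ᵥ w) := by rw [Matrix.mulVec_smul]
  exact csInf_le_csInf hSbdd hne hsub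
end

section
/- Let m ≥ n be positive integers, let A, B ∈ ℝ^{m×m} be symmetric positive definite matrices, and let R ∈ ℝ^{n×m} be surjective. Then the condition number of (R B⁻¹ Rᵀ)⁻¹ (R A Rᵀ) is at most the condition number of BA, where the condition number is λ_max/λ_min over the (real positive) eigenvalues. -/
open Matrix

section helpers

variable {ι : Type*} [Fintype ι] [DecidableEq ι]

private lemma quadform_pos {M : Matrix ι ι ℝ} (hM : M.PosDef) {x : ι → ℝ} (hx : x ≠ 0) :
    0 < x ⬝ᵥ M.mulVec x := by
  simpa using hM.dotProduct_mulVec_pos hx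

private lemma spec_conj {S : Matrix ι ι ℝ} (M : Matrix ι ι ℝ) (hS : IsUnit S.det) :
    spectrum ℝ (S * M * S⁻¹) = spectrum ℝ M := by
  ext μ
  rw [spectrum.mem_iff, spectrum.mem_iff, not_iff_not]
  have key : algebraMap ℝ (Matrix ι ι ℝ) μ - S * M * S⁻¹
      = S * (algebraMap ℝ (Matrix ι ι ℝ) μ - M) * S⁻¹ := by
    rw [mul_sub, sub_mul]
    congr 1
    rw [Algebra.algebraMap_eq_smul_one, Matrix.mul_smul, mul_one, Matrix.smul_mul,
      Matrix.mul_nonsing_inv _ hS]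
  rw [key, Matrix.isUnit_iff_isUnit_det,
    Matrix.isUnit_iff_isUnit_det (algebraMap ℝ (Matrix ι ι ℝ) μ - M),
    det_mul, det_mul, det_nonsing_inv, Ring.inverse_eq_inv]
  have h0 : S.det ≠ 0 := hS.ne_zero
  have heq : S.det * (algebraMap ℝ (Matrix ι ι ℝ) μ - M).det * S.det⁻¹
      = (algebraMap ℝ (Matrix ι ι ℝ) μ - M).det := by
    field_simp
  rw [heq]

private lemma herm_decomp {H : Matrix ι ι ℝ} (hH : H.IsHermitian) (μ : ℝ) :
    μ • (1 : Matrix ι ι ℝ) - H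
      = (hH.eigenvectorUnitary : Matrix ι ι ℝ)
        * diagonal (fun i => μ - hH.eigenvalues i)
        * star (hH.eigenvectorUnitary : Matrix ι ι ℝ) := by
  set U := (hH.eigenvectorUnitary : Matrix ι ι ℝ) with hU
  have hUU : U * star U = 1 := (Matrix.mem_unitaryGroup_iff).mp hH.eigenvectorUnitary.2
  have hdiag : diagonal (fun i => μ - hH.eigenvalues i)
      = μ • (1 : Matrix ι ι ℝ) - diagonal (RCLike.ofReal ∘ hH.eigenvalues) := by
    rw [smul_one_eq_diagonal, ← diagonal_sub]
    rfl
  rw [hdiag, mul_sub, sub_mul, Matrix.mul_smul, mul_one, Matrix.smul_mul, hUU,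
    hU, ← Unitary.conjStarAlgAut_apply (S := ℝ), ← hH.spectral_theorem]

private lemma herm_spectrum_eq {H : Matrix ι ι ℝ} (hH : H.IsHermitian) :
    spectrum ℝ H = Set.range hH.eigenvalues := by
  ext μ
  rw [spectrum.mem_iff, Matrix.isUnit_iff_isUnit_det, isUnit_iff_ne_zero, not_not]
  set U := (hH.eigenvectorUnitary : Matrix ι ι ℝ) with hU
  have hUU : U * star U = 1 := (Matrix.mem_unitaryGroup_iff).mp hH.eigenvectorUnitary.2
  have halg : algebraMap ℝ (Matrix ι ι ℝ) μ - H = μ • (1 : Matrix ι ι ℝ) - H := by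
    rw [Algebra.algebraMap_eq_smul_one]
  have hdet : (algebraMap ℝ (Matrix ι ι ℝ) μ - H).det
      = ∏ i, (μ - hH.eigenvalues i) := by
    rw [halg, herm_decomp hH μ, det_mul, det_mul]
    have h1 : U.det * (star U).det = 1 := by rw [← det_mul, hUU, det_one]
    calc U.det * (diagonal (fun i => μ - hH.eigenvalues i)).det * (star U).det
        = U.det * (star U).det * (diagonal (fun i => μ - hH.eigenvalues i)).det := by ring
      _ = ∏ i, (μ - hH.eigenvalues i) := by rw [h1, one_mul, det_diagonal]
  rw [hdet, Finset.prod_eq_zero_iff]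
  constructor
  · rintro ⟨i, -, hi⟩
    exact ⟨i, (sub_eq_zero.mp hi).symm⟩
  · rintro ⟨i, hi⟩
    exact ⟨i, Finset.mem_univ i, by rw [hi, sub_self]⟩

private lemma herm_ub_psd {H : Matrix ι ι ℝ} (hH : H.IsHermitian) {α : ℝ}
    (h : ∀ i, hH.eigenvalues i ≤ α) : (α • (1 : Matrix ι ι ℝ) - H).PosSemidef := by
  rw [herm_decomp hH α, star_eq_conjTranspose]
  exact (Matrix.PosSemidef.diagonal (fun i => sub_nonneg.mpr (h i))).mul_mul_conjTranspose_same _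

private lemma herm_decomp' {H : Matrix ι ι ℝ} (hH : H.IsHermitian) (μ : ℝ) :
    H - μ • (1 : Matrix ι ι ℝ)
      = (hH.eigenvectorUnitary : Matrix ι ι ℝ)
        * diagonal (fun i => hH.eigenvalues i - μ)
        * star (hH.eigenvectorUnitary : Matrix ι ι ℝ) := by
  set U := (hH.eigenvectorUnitary : Matrix ι ι ℝ) with hU
  have hUU : U * star U = 1 := (Matrix.mem_unitaryGroup_iff).mp hH.eigenvectorUnitary.2
  have hdiag : diagonal (fun i => hH.eigenvalues i - μ)
      = diagonal (RCLike.ofReal ∘ hH.eigenvalues) - μ • (1 : Matrix ι ι ℝ) := by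
    rw [smul_one_eq_diagonal, ← diagonal_sub]
    rfl
  rw [hdiag, mul_sub, sub_mul, Matrix.mul_smul, mul_one, Matrix.smul_mul, hUU,
    hU, ← Unitary.conjStarAlgAut_apply (S := ℝ), ← hH.spectral_theorem]

private lemma herm_lb_psd {H : Matrix ι ι ℝ} (hH : H.IsHermitian) {β : ℝ}
    (h : ∀ i, β ≤ hH.eigenvalues i) : (H - β • (1 : Matrix ι ι ℝ)).PosSemidef := by
  rw [herm_decomp' hH β, star_eq_conjTranspose]
  exact (Matrix.PosSemidef.diagonal (fun i => sub_nonneg.mpr (h i))).mul_mul_conjTranspose_same _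

private lemma pencil_main [Nonempty ι] {P Q : Matrix ι ι ℝ} (hP : P.PosDef)
    (hQ : Q.IsHermitian) :
    (spectrum ℝ (P⁻¹ * Q)).Finite ∧ (spectrum ℝ (P⁻¹ * Q)).Nonempty ∧
    (sSup (spectrum ℝ (P⁻¹ * Q)) • P - Q).PosSemidef ∧
    (Q - sInf (spectrum ℝ (P⁻¹ * Q)) • P).PosSemidef := by
  have hPi : (P⁻¹).PosDef := hP.inv
  set T := (open scoped MatrixOrder in CFC.sqrt (P⁻¹)) with hTdef
  have hT : T.PosSemidef := (open scoped MatrixOrder in Matrix.LE.le.posSemidef (CFC.sqrt_nonneg (P⁻¹)))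
  have hTT : T * T = P⁻¹ := (open scoped MatrixOrder in CFC.sqrt_mul_sqrt_self (P⁻¹) hPi.posSemidef.nonneg)
  have hdetT : IsUnit T.det := by
    rw [isUnit_iff_ne_zero]
    intro h0
    have : (P⁻¹).det = 0 := by rw [← hTT, det_mul, h0, zero_mul]
    exact hPi.det_pos.ne' this
  have hdetP : IsUnit P.det := hP.det_pos.ne'.isUnit
  set H := T * Q * T with hHdef
  have hH : H.IsHermitian := by
    show Hᴴ = H
    rw [hHdef, conjTranspose_mul, conjTranspose_mul, hT.1.eq, hQ.eq, mul_assoc]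
  have hconj : P⁻¹ * Q = T * H * T⁻¹ := by
    rw [hHdef]
    rw [mul_assoc, mul_assoc, Matrix.mul_nonsing_inv _ hdetT, mul_one, ← mul_assoc, hTT]
  have hspec : spectrum ℝ (P⁻¹ * Q) = Set.range hH.eigenvalues := by
    rw [hconj, spec_conj H hdetT, herm_spectrum_eq hH]
  have hfin : (spectrum ℝ (P⁻¹ * Q)).Finite := by
    rw [hspec]; exact Set.finite_range _
  have hne : (spectrum ℝ (P⁻¹ * Q)).Nonempty := by
    rw [hspec]; exact Set.range_nonempty _
  have hub : ∀ i, hH.eigenvalues i ≤ sSup (spectrum ℝ (P⁻¹ * Q)) := by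
    intro i
    exact le_csSup hfin.bddAbove (by rw [hspec]; exact Set.mem_range_self i)
  have hlb : ∀ i, sInf (spectrum ℝ (P⁻¹ * Q)) ≤ hH.eigenvalues i := by
    intro i
    exact csInf_le hfin.bddBelow (by rw [hspec]; exact Set.mem_range_self i)
  have hTinv : (T⁻¹)ᴴ = T⁻¹ := by rw [conjTranspose_nonsing_inv, hT.1.eq]
  have htrans : ∀ γ : ℝ, T⁻¹ * (γ • (1 : Matrix ι ι ℝ) - H) * T⁻¹ = γ • P - Q := by
    intro γ
    rw [mul_sub, sub_mul]
    congr 1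
    · rw [Matrix.mul_smul, mul_one, Matrix.smul_mul, ← Matrix.mul_inv_rev, hTT,
        Matrix.nonsing_inv_nonsing_inv _ hdetP]
    · rw [hHdef]
      simp only [← mul_assoc]
      rw [Matrix.nonsing_inv_mul _ hdetT, one_mul, mul_assoc,
        Matrix.mul_nonsing_inv _ hdetT, mul_one]
  refine ⟨hfin, hne, ?_, ?_⟩
  · have := (herm_ub_psd hH hub).mul_mul_conjTranspose_same T⁻¹
    rwa [hTinv, htrans] at this
  · have key : T⁻¹ * (H - sInf (spectrum ℝ (P⁻¹ * Q)) • (1 : Matrix ι ι ℝ)) * T⁻¹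
        = Q - sInf (spectrum ℝ (P⁻¹ * Q)) • P := by
      have h1 := htrans (sInf (spectrum ℝ (P⁻¹ * Q)))
      have h2 : H - sInf (spectrum ℝ (P⁻¹ * Q)) • (1 : Matrix ι ι ℝ)
          = -(sInf (spectrum ℝ (P⁻¹ * Q)) • (1 : Matrix ι ι ℝ) - H) := by rw [neg_sub]
      rw [h2, Matrix.mul_neg, Matrix.neg_mul, h1, neg_sub]

    have := (herm_lb_psd hH hlb).mul_mul_conjTranspose_same T⁻¹
    rwa [hTinv, key] at this

private lemma pencil_eigen {P Q : Matrix ι ι ℝ} (hP : P.PosDef) {μ : ℝ}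
    (hμ : μ ∈ spectrum ℝ (P⁻¹ * Q)) :
    ∃ v : ι → ℝ, v ≠ 0 ∧ Q.mulVec v = μ • P.mulVec v := by
  have hdetP : IsUnit P.det := hP.det_pos.ne'.isUnit
  rw [spectrum.mem_iff, Matrix.isUnit_iff_isUnit_det, isUnit_iff_ne_zero, not_not] at hμ
  obtain ⟨v, hv0, hv⟩ := (Matrix.exists_mulVec_eq_zero_iff).mpr hμ
  refine ⟨v, hv0, ?_⟩
  have h1 : (P⁻¹ * Q).mulVec v = μ • v := by
    rw [Matrix.sub_mulVec, sub_eq_zero] at hv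
    rw [← hv, Algebra.algebraMap_eq_smul_one, Matrix.smul_mulVec, Matrix.one_mulVec]
  have h2 : Q = P * (P⁻¹ * Q) := by
    rw [← mul_assoc, Matrix.mul_nonsing_inv _ hdetP, one_mul]
  rw [h2, ← Matrix.mulVec_mulVec, h1, Matrix.mulVec_smul]

private lemma pencil_pos {P Q : Matrix ι ι ℝ} (hP : P.PosDef) (hQ : Q.PosDef) {μ : ℝ}
    (hμ : μ ∈ spectrum ℝ (P⁻¹ * Q)) : 0 < μ := by
  obtain ⟨v, hv0, hv⟩ := pencil_eigen hP hμ
  have hc : 0 < v ⬝ᵥ P.mulVec v := quadform_pos hP hv0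
  have hq : 0 < v ⬝ᵥ Q.mulVec v := quadform_pos hQ hv0
  rw [hv, dotProduct_smul, smul_eq_mul] at hq
  nlinarith

private lemma pencil_le {P Q : Matrix ι ι ℝ} (hP : P.PosDef) {μ : ℝ}
    (hμ : μ ∈ spectrum ℝ (P⁻¹ * Q)) {α : ℝ} (h : (α • P - Q).PosSemidef) : μ ≤ α := by
  obtain ⟨v, hv0, hv⟩ := pencil_eigen hP hμ
  have hc : 0 < v ⬝ᵥ P.mulVec v := quadform_pos hP hv0
  have hq : 0 ≤ v ⬝ᵥ (α • P - Q).mulVec v := by simpa using h.dotProduct_mulVec_nonneg v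
  rw [Matrix.sub_mulVec, dotProduct_sub, Matrix.smul_mulVec, dotProduct_smul,
    smul_eq_mul, hv, dotProduct_smul, smul_eq_mul] at hq
  nlinarith

private lemma pencil_ge {P Q : Matrix ι ι ℝ} (hP : P.PosDef) {μ : ℝ}
    (hμ : μ ∈ spectrum ℝ (P⁻¹ * Q)) {β : ℝ} (h : (Q - β • P).PosSemidef) : β ≤ μ := by
  obtain ⟨v, hv0, hv⟩ := pencil_eigen hP hμ
  have hc : 0 < v ⬝ᵥ P.mulVec v := quadform_pos hP hv0
  have hq : 0 ≤ v ⬝ᵥ (Q - β • P).mulVec v := by simpa using h.dotProduct_mulVec_nonneg v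
  rw [Matrix.sub_mulVec, dotProduct_sub, Matrix.smul_mulVec, dotProduct_smul,
    smul_eq_mul, hv, dotProduct_smul, smul_eq_mul] at hq
  nlinarith

private lemma rmr_posdef {m n : ℕ} {M : Matrix (Fin m) (Fin m) ℝ} (hM : M.PosDef)
    {R : Matrix (Fin n) (Fin m) ℝ} (hR : Function.Surjective R.mulVec) :
    (R * M * Rᵀ).PosDef := by
  have hker : ∀ x : Fin n → ℝ, Rᵀ.mulVec x = 0 → x = 0 := by
    intro x hx
    have hxx : x ⬝ᵥ x = 0 := by
      obtain ⟨y, hy⟩ := hR x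
      calc x ⬝ᵥ x = x ⬝ᵥ R.mulVec y := by rw [hy]
        _ = (Rᵀ.mulVec x) ⬝ᵥ y := by rw [dotProduct_mulVec, Matrix.mulVec_transpose]
        _ = 0 := by rw [hx, zero_dotProduct]
    exact dotProduct_self_eq_zero.mp hxx
  refine posDef_iff_dotProduct_mulVec.mpr ⟨?_, ?_⟩
  · show (R * M * Rᵀ)ᴴ = R * M * Rᵀ
    rw [conjTranspose_mul, conjTranspose_mul, hM.1.eq,
      conjTranspose_eq_transpose_of_trivial, conjTranspose_eq_transpose_of_trivial,
      transpose_transpose, ← Matrix.mul_assoc]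
  · intro x hx
    have hRx : Rᵀ.mulVec x ≠ 0 := fun h => hx (hker x h)
    have key : star x ⬝ᵥ (R * M * Rᵀ).mulVec x
        = (Rᵀ.mulVec x) ⬝ᵥ M.mulVec (Rᵀ.mulVec x) := by
      rw [show (star x : Fin n → ℝ) = x from funext fun i => rfl,
        ← Matrix.mulVec_mulVec, ← Matrix.mulVec_mulVec, dotProduct_mulVec,
        Matrix.mulVec_transpose]
    rw [key]
    exact quadform_pos hM hRx

end helpers

/-- κ((R B⁻¹ Rᵀ)⁻¹ R A Rᵀ) ≤ κ(BA), where κ(M) = λ_max(M)/λ_min(M) taken over the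
(real, positive) eigenvalues, i.e., over the real spectrum of the matrix. -/
theorem stmt_2 {m n : ℕ} (hmn : n ≤ m) (hn : 0 < n)
    (A B : Matrix (Fin m) (Fin m) ℝ) (hA : A.PosDef) (hB : B.PosDef)
    (R : Matrix (Fin n) (Fin m) ℝ) (hR : Function.Surjective R.mulVec) :
    sSup (spectrum ℝ ((R * B⁻¹ * R.transpose)⁻¹ * (R * A * R.transpose))) /
      sInf (spectrum ℝ ((R * B⁻¹ * R.transpose)⁻¹ * (R * A * R.transpose))) ≤
    sSup (spectrum ℝ (B * A)) / sInf (spectrum ℝ (B * A)) := by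
  have hm : 0 < m := lt_of_lt_of_le hn hmn
  have : Nonempty (Fin m) := ⟨⟨0, hm⟩⟩
  have : Nonempty (Fin n) := ⟨⟨0, hn⟩⟩
  have hBi : (B⁻¹).PosDef := hB.inv
  have hBB : (B⁻¹)⁻¹ = B := Matrix.nonsing_inv_nonsing_inv B hB.det_pos.ne'.isUnit
  -- big pencil
  obtain ⟨hfin₁, hne₁, hub₁, hlb₁⟩ := pencil_main hBi hA.1
  rw [hBB] at hfin₁ hne₁ hub₁ hlb₁
  set α := sSup (spectrum ℝ (B * A)) with hαdef
  set β := sInf (spectrum ℝ (B * A)) with hβdef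
  have hαmem : α ∈ spectrum ℝ (B * A) := hne₁.csSup_mem hfin₁
  have hβmem : β ∈ spectrum ℝ (B * A) := hne₁.csInf_mem hfin₁
  have hβpos : 0 < β := by
    have := pencil_pos hBi hA (by rw [hBB]; exact hβmem)
    exact this
  have hαpos : 0 < α := by
    have := pencil_pos hBi hA (by rw [hBB]; exact hαmem)
    exact this
  -- small pencil
  have hP2 : (R * B⁻¹ * Rᵀ).PosDef := rmr_posdef hBi hR
  have hQ2 : (R * A * Rᵀ).PosDef := rmr_posdef hA hR
  obtain ⟨hfin₂, hne₂, -, -⟩ := pencil_main hP2 hQ2.1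
  set a := sSup (spectrum ℝ ((R * B⁻¹ * Rᵀ)⁻¹ * (R * A * Rᵀ))) with hadef
  set b := sInf (spectrum ℝ ((R * B⁻¹ * Rᵀ)⁻¹ * (R * A * Rᵀ))) with hbdef
  have hamem : a ∈ spectrum ℝ ((R * B⁻¹ * Rᵀ)⁻¹ * (R * A * Rᵀ)) := hne₂.csSup_mem hfin₂
  have hbmem : b ∈ spectrum ℝ ((R * B⁻¹ * Rᵀ)⁻¹ * (R * A * Rᵀ)) := hne₂.csInf_mem hfin₂
  have hRherm : Rᴴ = Rᵀ := by
    rw [conjTranspose_eq_transpose_of_trivial]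
  -- transfer PSD facts
  have hub₂ : (α • (R * B⁻¹ * Rᵀ) - R * A * Rᵀ).PosSemidef := by
    have h1 := hub₁.mul_mul_conjTranspose_same R
    rw [hRherm] at h1
    have h2 : R * (α • B⁻¹ - A) * Rᵀ = α • (R * B⁻¹ * Rᵀ) - R * A * Rᵀ := by
      rw [Matrix.mul_sub, Matrix.sub_mul, Matrix.mul_smul, Matrix.smul_mul]
    rwa [h2] at h1
  have hlb₂ : (R * A * Rᵀ - β • (R * B⁻¹ * Rᵀ)).PosSemidef := by
    have h1 := hlb₁.mul_mul_conjTranspose_same R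
    rw [hRherm] at h1
    have h2 : R * (A - β • B⁻¹) * Rᵀ = R * A * Rᵀ - β • (R * B⁻¹ * Rᵀ) := by
      rw [Matrix.mul_sub, Matrix.sub_mul, Matrix.mul_smul, Matrix.smul_mul]
    rwa [h2] at h1
  have ha_le : a ≤ α := pencil_le hP2 hamem hub₂
  have hb_ge : β ≤ b := pencil_ge hP2 hbmem hlb₂
  have hbpos : 0 < b := pencil_pos hP2 hQ2 hbmem
  have hapos : 0 ≤ α := le_of_lt hαpos
  exact div_le_div₀ hapos ha_le hβpos hb_ge
end
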